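/- Let G be a finite group and ρ : G → GL(V) a faithful representation on a finite-dimensional real vector space V, identified with a subgroup of invertible matrices in End(V). Then the set of vertices (extreme points) of the representation polytope P(ρ) = conv(ρ(g) : g ∈ G) ⊆ End(V) is exactly the set ρ(G). -/

import Mathlib

open Finset

section RepPolytopeAux

variable {G : Type} [Group G] [Fintype G]
variable {V : Type} [AddCommGroup V] [Module ℝ V] [FiniteDimensional ℝ V]

/-- An invariant positive definite bilinear form obtained by averaging. -/
noncomputable def rpB (ρ : Representation ℝ G V)
    (b : Module.Basis (Fin (Module.finrank ℝ V)) ℝ V) (u v : V) : ℝ :=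
  ∑ g : G, ∑ i, b.repr (ρ g u) i * b.repr (ρ g v) i

lemma rpB_add_left (ρ : Representation ℝ G V)
    (b : Module.Basis (Fin (Module.finrank ℝ V)) ℝ V) (u w v : V) :
    rpB ρ b (u + w) v = rpB ρ b u v + rpB ρ b w v := by
  simp [rpB, add_mul, Finset.sum_add_distrib]

lemma rpB_smul_left (ρ : Representation ℝ G V)
    (b : Module.Basis (Fin (Module.finrank ℝ V)) ℝ V) (a : ℝ) (u v : V) :
    rpB ρ b (a • u) v = a * rpB ρ b u v := by
  simp [rpB, Finset.mul_sum, mul_assoc]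

lemma rpB_self_nonneg (ρ : Representation ℝ G V)
    (b : Module.Basis (Fin (Module.finrank ℝ V)) ℝ V) (u : V) :
    0 ≤ rpB ρ b u u := by
  apply Finset.sum_nonneg
  intro g _
  apply Finset.sum_nonneg
  intro i _
  exact mul_self_nonneg _

lemma rpB_self_eq_zero (ρ : Representation ℝ G V)
    (b : Module.Basis (Fin (Module.finrank ℝ V)) ℝ V) (u : V)
    (h : rpB ρ b u u = 0) : u = 0 := by
  classical
  have h1 : ∀ g ∈ (Finset.univ : Finset G),
      (∑ i, b.repr (ρ g u) i * b.repr (ρ g u) i) = 0 := by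
    rw [← Finset.sum_eq_zero_iff_of_nonneg]
    · exact h
    · intro g _
      exact Finset.sum_nonneg fun i _ => mul_self_nonneg _
  have h2 : ∀ i ∈ (Finset.univ : Finset (Fin (Module.finrank ℝ V))),
      b.repr (ρ (1 : G) u) i * b.repr (ρ (1 : G) u) i = 0 := by
    rw [← Finset.sum_eq_zero_iff_of_nonneg]
    · exact h1 1 (Finset.mem_univ _)
    · intro i _
      exact mul_self_nonneg _
  have h3 : b.repr u = 0 := by
    ext i
    have h4 := mul_self_eq_zero.mp (h2 i (Finset.mem_univ i))
    simpa using h4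
  exact (LinearEquiv.map_eq_zero_iff b.repr).mp h3

lemma rpB_invariant (ρ : Representation ℝ G V)
    (b : Module.Basis (Fin (Module.finrank ℝ V)) ℝ V) (h : G) (u v : V) :
    rpB ρ b (ρ h u) (ρ h v) = rpB ρ b u v := by
  classical
  unfold rpB
  refine Fintype.sum_equiv (Equiv.mulRight h) _ _ fun g => ?_
  have hu : ρ g (ρ h u) = ρ (g * h) u := by rw [map_mul]; rfl
  have hv : ρ g (ρ h v) = ρ (g * h) v := by rw [map_mul]; rfl
  simp only [Equiv.coe_mulRight, hu, hv]

lemma rpB_sub_self (ρ : Representation ℝ G V)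
    (b : Module.Basis (Fin (Module.finrank ℝ V)) ℝ V) (u v : V) :
    rpB ρ b (u - v) (u - v) = rpB ρ b u u + rpB ρ b v v - 2 * rpB ρ b u v := by
  unfold rpB
  rw [Finset.mul_sum, ← Finset.sum_add_distrib, ← Finset.sum_sub_distrib]
  refine Finset.sum_congr rfl fun g _ => ?_
  rw [Finset.mul_sum, ← Finset.sum_add_distrib, ← Finset.sum_sub_distrib]
  refine Finset.sum_congr rfl fun i _ => ?_
  simp only [map_sub, Finsupp.sub_apply]
  ring

/-- The key inequality: the form against a fixed vector of equal "length" is maximized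
only at that vector. -/
lemma rpB_le (ρ : Representation ℝ G V)
    (b : Module.Basis (Fin (Module.finrank ℝ V)) ℝ V) (u v : V) :
    2 * rpB ρ b u v ≤ rpB ρ b u u + rpB ρ b v v := by
  have h := rpB_self_nonneg ρ b (u - v)
  rw [rpB_sub_self] at h
  linarith

lemma rpB_eq_of_eq (ρ : Representation ℝ G V)
    (b : Module.Basis (Fin (Module.finrank ℝ V)) ℝ V) (u v : V)
    (h : 2 * rpB ρ b u v = rpB ρ b u u + rpB ρ b v v) : u = v := by
  have h0 : rpB ρ b (u - v) (u - v) = 0 := by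
    rw [rpB_sub_self]; linarith
  have := rpB_self_eq_zero ρ b _ h0
  rwa [sub_eq_zero] at this

end RepPolytopeAux

/-- For a finite group `G` and a faithful real representation
`ρ : G → GL(V)` on a finite-dimensional real vector space `V` (identified with a
subgroup of the invertible elements of `End(V)`), the set of vertices (extreme
points) of the representation polytope `P(ρ) = conv(ρ(g) : g ∈ G) ⊆ End(V)` is
exactly `ρ(G)`. -/
theorem vertices_of_representation_polytope
    {G : Type} [Group G] [Fintype G]
    {V : Type} [AddCommGroup V] [Module ℝ V] [FiniteDimensional ℝ V]
    (ρ : Representation ℝ G V) (hρ : Function.Injective ρ) :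
    Set.extremePoints ℝ (convexHull ℝ (Set.range fun g : G => (ρ g : V →ₗ[ℝ] V)))
      = Set.range fun g : G => (ρ g : V →ₗ[ℝ] V) := by
  classical
  set S : Set (V →ₗ[ℝ] V) := Set.range fun g : G => (ρ g : V →ₗ[ℝ] V) with hS
  apply Set.Subset.antisymm
  · exact extremePoints_convexHull_subset
  rintro _ ⟨g₀, rfl⟩
  set b : Module.Basis (Fin (Module.finrank ℝ V)) ℝ V := Module.finBasis ℝ V with hb
  -- the exposing linear functional
  set F : (V →ₗ[ℝ] V) →ₗ[ℝ] ℝ :=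
    { toFun := fun A => ∑ i, rpB ρ b (A (b i)) (ρ g₀ (b i))
      map_add' := by
        intro A B
        simp only [LinearMap.add_apply]
        rw [← Finset.sum_add_distrib]
        exact Finset.sum_congr rfl fun i _ => rpB_add_left ρ b _ _ _
      map_smul' := by
        intro a A
        simp only [LinearMap.smul_apply, RingHom.id_apply]
        rw [Finset.smul_sum]
        exact Finset.sum_congr rfl fun i _ => rpB_smul_left ρ b a _ _ } with hF
  set n' : ℝ := ∑ i, rpB ρ b (b i) (b i) with hn'
  -- F on group elements
  have hFh : ∀ h : G, F (ρ h) ≤ n' := by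
    intro h
    show (∑ i, rpB ρ b (ρ h (b i)) (ρ g₀ (b i))) ≤ ∑ i, rpB ρ b (b i) (b i)
    apply Finset.sum_le_sum
    intro i _
    have h1 := rpB_le ρ b (ρ h (b i)) (ρ g₀ (b i))
    have e1 : rpB ρ b (ρ h (b i)) (ρ h (b i)) = rpB ρ b (b i) (b i) :=
      rpB_invariant ρ b h (b i) (b i)
    have e2 : rpB ρ b (ρ g₀ (b i)) (ρ g₀ (b i)) = rpB ρ b (b i) (b i) :=
      rpB_invariant ρ b g₀ (b i) (b i)
    linarith
  have hFg₀ : F (ρ g₀) = n' := by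
    simp only [hF, LinearMap.coe_mk, AddHom.coe_mk, hn']
    exact Finset.sum_congr rfl fun i _ => rpB_invariant ρ b g₀ (b i) (b i)
  have hFeq : ∀ h : G, F (ρ h) = n' → (ρ h : V →ₗ[ℝ] V) = ρ g₀ := by
    intro h heq
    apply b.ext
    intro i
    have hterm : ∀ i ∈ (Finset.univ : Finset (Fin (Module.finrank ℝ V))),
        rpB ρ b (b i) (b i) - rpB ρ b (ρ h (b i)) (ρ g₀ (b i)) = 0 := by
      rw [← Finset.sum_eq_zero_iff_of_nonneg]
      · rw [Finset.sum_sub_distrib]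
        have : F (ρ h) = ∑ i, rpB ρ b (ρ h (b i)) (ρ g₀ (b i)) := rfl
        rw [← this, heq, hn']
        ring
      · intro i _
        have h1 := rpB_le ρ b (ρ h (b i)) (ρ g₀ (b i))
        have e1 : rpB ρ b (ρ h (b i)) (ρ h (b i)) = rpB ρ b (b i) (b i) :=
          rpB_invariant ρ b h (b i) (b i)
        have e2 : rpB ρ b (ρ g₀ (b i)) (ρ g₀ (b i)) = rpB ρ b (b i) (b i) :=
          rpB_invariant ρ b g₀ (b i) (b i)
        linarith
    have := hterm i (Finset.mem_univ i)
    have e1 : rpB ρ b (ρ h (b i)) (ρ h (b i)) = rpB ρ b (b i) (b i) :=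
      rpB_invariant ρ b h (b i) (b i)
    have e2 : rpB ρ b (ρ g₀ (b i)) (ρ g₀ (b i)) = rpB ρ b (b i) (b i) :=
      rpB_invariant ρ b g₀ (b i) (b i)
    exact rpB_eq_of_eq ρ b _ _ (by linarith)
  -- F is at most n' on the hull
  have hHull : ∀ x ∈ convexHull ℝ S, F x ≤ n' := by
    intro x hx
    have hconv : Convex ℝ {y : V →ₗ[ℝ] V | F y ≤ n'} := by
      intro y hy z hz a c ha hc hac
      simp only [Set.mem_setOf_eq] at *
      rw [map_add, map_smul, map_smul, smul_eq_mul, smul_eq_mul]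
      have e1 : a * F y ≤ a * n' := mul_le_mul_of_nonneg_left hy ha
      have e2 : c * F z ≤ c * n' := mul_le_mul_of_nonneg_left hz hc
      have e3 : a * n' + c * n' = n' := by rw [← add_mul, hac, one_mul]
      linarith
    have hsub : S ⊆ {y : V →ₗ[ℝ] V | F y ≤ n'} := by
      rintro _ ⟨h, rfl⟩
      exact hFh h
    exact convexHull_min hsub hconv hx
  -- equality case on the hull
  have hHullEq : ∀ x ∈ convexHull ℝ S, F x = n' → x = ρ g₀ := by
    intro x hx heq
    rw [_root_.convexHull_eq] at hx
    obtain ⟨ι, t, w, z, hw0, hw1, hzS, hcm⟩ := hx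
    rw [Finset.centerMass_eq_of_sum_1 _ _ hw1] at hcm
    have hFz : ∀ i ∈ t, F (z i) ≤ n' := by
      intro i hi
      obtain ⟨h, hh⟩ := hzS i hi
      rw [← hh]
      exact hFh h
    have hzero : ∀ i ∈ t, w i * (n' - F (z i)) = 0 := by
      rw [← Finset.sum_eq_zero_iff_of_nonneg]
      · have hFX : F x = ∑ i ∈ t, w i * F (z i) := by
          rw [← hcm, map_sum]
          exact Finset.sum_congr rfl fun i _ => by rw [map_smul, smul_eq_mul]
        have : ∑ i ∈ t, w i * (n' - F (z i))
            = (∑ i ∈ t, w i) * n' - ∑ i ∈ t, w i * F (z i) := by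
          rw [Finset.sum_mul, ← Finset.sum_sub_distrib]
          exact Finset.sum_congr rfl fun i _ => by ring
        rw [this, hw1, ← hFX, heq]
        ring
      · intro i hi
        exact mul_nonneg (hw0 i hi) (by linarith [hFz i hi])
    have hzeq : ∀ i ∈ t, w i ≠ 0 → z i = ρ g₀ := by
      intro i hi hwi
      obtain ⟨h, hh⟩ := hzS i hi
      have := hzero i hi
      have hFzi : F (z i) = n' := by
        rcases mul_eq_zero.mp this with h' | h'
        · exact absurd h' hwi
        · linarith
      rw [← hh] at hFzi ⊢
      exact hFeq h hFzi
    rw [← hcm]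
    have : ∀ i ∈ t, w i • z i = w i • (ρ g₀ : V →ₗ[ℝ] V) := by
      intro i hi
      by_cases hwi : w i = 0
      · rw [hwi, zero_smul, zero_smul]
      · rw [hzeq i hi hwi]
    rw [Finset.sum_congr rfl this, ← Finset.sum_smul, hw1, one_smul]
  -- conclude extremeness
  rw [mem_extremePoints]
  refine ⟨subset_convexHull ℝ S ⟨g₀, rfl⟩, ?_⟩
  intro x₁ hx₁ x₂ hx₂ hseg
  obtain ⟨a, c, ha, hc, hac, habc⟩ := hseg
  have h1 := hHull x₁ hx₁
  have h2 := hHull x₂ hx₂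
  have hsum : a * F x₁ + c * F x₂ = n' := by
    have : F (a • x₁ + c • x₂) = n' := by rw [habc]; exact hFg₀
    rw [map_add, map_smul, map_smul, smul_eq_mul, smul_eq_mul] at this
    exact this
  have e3 : a * n' + c * n' = n' := by rw [← add_mul, hac, one_mul]
  have k1 : 0 ≤ a * (n' - F x₁) := mul_nonneg ha.le (by linarith)
  have k2 : 0 ≤ c * (n' - F x₂) := mul_nonneg hc.le (by linarith)
  have key : a * (n' - F x₁) + c * (n' - F x₂) = 0 := by linear_combination e3 - hsum
  have z1 : a * (n' - F x₁) = 0 := by linarith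
  have z2 : c * (n' - F x₂) = 0 := by linarith
  have hF1 : F x₁ = n' := by
    have := (mul_eq_zero.mp z1).resolve_left (ne_of_gt ha)
    linarith
  have hF2 : F x₂ = n' := by
    have := (mul_eq_zero.mp z2).resolve_left (ne_of_gt hc)
    linarith
  exact ⟨hHullEq x₁ hx₁ hF1, hHullEq x₂ hx₂ hF2⟩
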